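/- Let 𝓘 be a finite set of open real intervals such that no interval contains the predicted weight of another: for all distinct u, v, the predicted point ŵ_u ∉ I_v. Then no interval of 𝓘 is contained in another, and the intersection graph of 𝓘 contains no triangle. -/
import Mathlib

lemma aux4 {ι : Type*} (L U pw : ι → ℝ)
    (hpw : ∀ v : ι, pw v ∈ Set.Ioo (L v) (U v))
    (hfree : ∀ u v : ι, u ≠ v → pw u ∉ Set.Ioo (L v) (U v))
    {a b c : ι} (hba : b ≠ a) (hbc : b ≠ c)
    (h1 : pw a ≤ pw b) (h2 : pw b ≤ pw c)
    (hac : (Set.Ioo (L a) (U a) ∩ Set.Ioo (L c) (U c)).Nonempty) : False := by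
  have hLa : L a < pw b := lt_of_lt_of_le (hpw a).1 h1
  have hUa : U a ≤ pw b := by
    by_contra h
    exact hfree b a hba ⟨hLa, lt_of_not_ge h⟩
  have hUc : pw b < U c := lt_of_le_of_lt h2 (hpw c).2
  have hLc : pw b ≤ L c := by
    by_contra h
    exact hfree b c hbc ⟨lt_of_not_ge h, hUc⟩
  obtain ⟨x, hxa, hxc⟩ := hac
  linarith [hxa.2, hxc.1]

theorem stmt4 {ι : Type*} [Fintype ι] (L U pw : ι → ℝ)
    (hpw : ∀ v : ι, pw v ∈ Set.Ioo (L v) (U v))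
    (hfree : ∀ u v : ι, u ≠ v → pw u ∉ Set.Ioo (L v) (U v)) :
    (∀ u v : ι, u ≠ v → ¬ (Set.Ioo (L u) (U u) ⊆ Set.Ioo (L v) (U v))) ∧
    ¬ ∃ a b c : ι, a ≠ b ∧ a ≠ c ∧ b ≠ c ∧
      (Set.Ioo (L a) (U a) ∩ Set.Ioo (L b) (U b)).Nonempty ∧
      (Set.Ioo (L a) (U a) ∩ Set.Ioo (L c) (U c)).Nonempty ∧
      (Set.Ioo (L b) (U b) ∩ Set.Ioo (L c) (U c)).Nonempty := by
  constructor
  · intro u v huv hsub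
    exact hfree u v huv (hsub (hpw u))
  · rintro ⟨a, b, c, hab, hac, hbc, hIab, hIac, hIbc⟩
    have hIab' : (Set.Ioo (L b) (U b) ∩ Set.Ioo (L a) (U a)).Nonempty := by
      rwa [Set.inter_comm]
    have hIac' : (Set.Ioo (L c) (U c) ∩ Set.Ioo (L a) (U a)).Nonempty := by
      rwa [Set.inter_comm]
    have hIbc' : (Set.Ioo (L c) (U c) ∩ Set.Ioo (L b) (U b)).Nonempty := by
      rwa [Set.inter_comm]
    rcases le_total (pw a) (pw b) with h1 | h1 <;>
      rcases le_total (pw b) (pw c) with h2 | h2 <;>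
      rcases le_total (pw a) (pw c) with h3 | h3
    · exact aux4 L U pw hpw hfree hab.symm hbc h1 h2 hIac
    · exact aux4 L U pw hpw hfree hab.symm hbc h1 h2 hIac
    · exact aux4 L U pw hpw hfree hac.symm hbc.symm h3 h2 hIab
    · exact aux4 L U pw hpw hfree hac hab h3 h1 hIbc'
    · exact aux4 L U pw hpw hfree hab hac h1 h3 hIbc
    · exact aux4 L U pw hpw hfree hbc.symm hac.symm h2 h3 hIab'
    · exact aux4 L U pw hpw hfree hbc hab.symm h2 h1 hIac'
    · exact aux4 L U pw hpw hfree hbc hab.symm h2 h1 hIac'
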